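/- The random-bit-selection quantizer B = b_α((Y+c)/(2c)) (with α geometric, P(α=j)=2^{-j}) and the random-threshold quantizer B' = 1(Y > R) (with R ~ Uniform[-c,c]) are statistically equivalent given the observation: for every y ∈ [-c, c], P(B = 1 | Y = y) = P(B' = 1 | Y = y) = (y + c)/(2c). -/

import Mathlib

open MeasureTheory ProbabilityTheory Set Filter Topology

/-- The `j`-th binary digit of `y ∈ [0,1]`, using the binary expansion that does not
terminate in all ones (with the convention `1 = 0.111...`). -/
noncomputable def binDigit (j : ℕ) (y : ℝ) : ℝ :=
  if y = 1 then 1 else ((⌊y * 2 ^ j⌋ % 2 : ℤ) : ℝ)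

lemma floor_two_mul_aux (y : ℝ) : ⌊2 * y⌋ % 2 = ⌊2 * y⌋ - 2 * ⌊y⌋ := by
  have h1 : 2 * ⌊y⌋ ≤ ⌊2 * y⌋ := by
    rw [Int.le_floor]; push_cast
    nlinarith [Int.floor_le y]
  have h2 : ⌊2 * y⌋ < 2 * ⌊y⌋ + 2 := by
    rw [Int.floor_lt]; push_cast
    nlinarith [Int.lt_floor_add_one y]
  omega

lemma bin_aux (x : ℝ) (j : ℕ) :
    ⌊x * 2 ^ (j + 1)⌋ % 2 = ⌊x * 2 ^ (j + 1)⌋ - 2 * ⌊x * 2 ^ j⌋ := by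
  have : x * 2 ^ (j + 1) = 2 * (x * 2 ^ j) := by ring
  rw [this, floor_two_mul_aux]

lemma bin_partial (x : ℝ) (hx : x ∈ Set.Ico (0:ℝ) 1) (n : ℕ) :
    ∑ j ∈ Finset.range (n + 1), ((⌊x * 2 ^ j⌋ % 2 : ℤ) : ℝ) * 2⁻¹ ^ j
      = (⌊x * 2 ^ n⌋ : ℝ) / 2 ^ n := by
  have hfl : ⌊x⌋ = 0 := Int.floor_eq_zero_iff.2 hx
  induction n with
  | zero => simp [hfl]
  | succ n ih =>
    rw [Finset.sum_range_succ, ih, bin_aux]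
    push_cast
    simp only [inv_pow]
    field_simp
    ring

lemma bin_hasSum (x : ℝ) (hx : x ∈ Set.Ico (0:ℝ) 1) :
    HasSum (fun j => ((⌊x * 2 ^ j⌋ % 2 : ℤ) : ℝ) * 2⁻¹ ^ j) x := by
  have hb : ∀ j : ℕ, (0:ℝ) ≤ ((⌊x * 2 ^ j⌋ % 2 : ℤ) : ℝ) ∧ ((⌊x * 2 ^ j⌋ % 2 : ℤ) : ℝ) ≤ 1 := by
    intro j
    rcases Int.emod_two_eq ⌊x * 2 ^ j⌋ with h | h <;> rw [h] <;> norm_num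
  have hsumm : Summable (fun j => ((⌊x * 2 ^ j⌋ % 2 : ℤ) : ℝ) * 2⁻¹ ^ j) := by
    have hg : Summable (fun j : ℕ => (2:ℝ)⁻¹ ^ j) :=
      summable_geometric_of_lt_one (by norm_num) (by norm_num)
    refine Summable.of_nonneg_of_le (fun j => mul_nonneg (hb j).1 (by positivity))
      (fun j => ?_) hg
    have h2 := (hb j).2
    nlinarith [pow_pos (show (0:ℝ) < 2⁻¹ by norm_num) j]
  rw [hsumm.hasSum_iff_tendsto_nat, ← tendsto_add_atTop_iff_nat 1]
  have heq : ∀ n : ℕ, ∑ i ∈ Finset.range (n + 1),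
      ((⌊x * 2 ^ i⌋ % 2 : ℤ) : ℝ) * 2⁻¹ ^ i = (⌊x * 2 ^ n⌋ : ℝ) / 2 ^ n :=
    bin_partial x hx
  simp only [heq]
  have hlow : Filter.Tendsto (fun n : ℕ => x - 2⁻¹ ^ n) atTop (𝓝 x) := by
    have := tendsto_pow_atTop_nhds_zero_of_lt_one (show (0:ℝ) ≤ 2⁻¹ by norm_num)
      (show (2:ℝ)⁻¹ < 1 by norm_num)
    simpa using (tendsto_const_nhds (x := x)).sub this
  apply tendsto_of_tendsto_of_tendsto_of_le_of_le hlow tendsto_const_nhds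
  · intro n
    have h := Int.lt_floor_add_one (x * 2 ^ n)
    have hp : (0:ℝ) < 2 ^ n := by positivity
    have hinv : (2:ℝ)⁻¹ ^ n * 2 ^ n = 1 := by rw [← mul_pow]; norm_num
    show x - 2⁻¹ ^ n ≤ (⌊x * 2 ^ n⌋ : ℝ) / 2 ^ n
    rw [le_div_iff₀ hp]
    nlinarith
  · intro n
    have hp : (0:ℝ) < 2 ^ n := by positivity
    show (⌊x * 2 ^ n⌋ : ℝ) / 2 ^ n ≤ x
    rw [div_le_iff₀ hp]
    exact Int.floor_le (x * 2 ^ n)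

lemma geo_hasSum_one : HasSum (fun j : ℕ => (2:ℝ)⁻¹ ^ (j + 1)) 1 := by
  have h := (hasSum_geometric_of_lt_one (show (0:ℝ) ≤ 2⁻¹ by norm_num)
    (by norm_num)).mul_left (2:ℝ)⁻¹
  norm_num at h
  have e : (fun j : ℕ => (2:ℝ)⁻¹ ^ (j + 1)) = fun i => 1 / 2 * (1 / 2) ^ i := by
    funext j
    rw [pow_succ]
    ring
  rw [e]; exact h

theorem stmt16 {Ω : Type*} [MeasureSpace Ω] [IsProbabilityMeasure (ℙ : Measure Ω)]
    (c : ℝ) (hc : 0 < c) (α : Ω → ℕ) (R : Ω → ℝ) (hα : Measurable α) (hR : Measurable R)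
    (hgeom : ∀ j : ℕ, 1 ≤ j → ℙ {ω | α ω = j} = ENNReal.ofReal ((2 : ℝ)⁻¹ ^ j))
    (hRunif : Measure.map R ℙ = (ENNReal.ofReal (2 * c))⁻¹ • volume.restrict (Set.Icc (-c) c)) :
    ∀ y ∈ Set.Icc (-c) c,
      ℙ {ω | binDigit (α ω) ((y + c) / (2 * c)) = 1} = ENNReal.ofReal ((y + c) / (2 * c)) ∧
      ℙ {ω | y > R ω} = ENNReal.ofReal ((y + c) / (2 * c)) := by
  intro y hy
  have h2c : (0:ℝ) < 2 * c := by linarith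
  set x : ℝ := (y + c) / (2 * c) with hxdef
  have hx0 : 0 ≤ x := div_nonneg (by linarith [hy.1]) h2c.le
  have hx1 : x ≤ 1 := by
    rw [hxdef, div_le_one h2c]; linarith [hy.2]
  constructor
  · -- bit selection part
    have hmeas : ∀ j : ℕ, MeasurableSet {ω | α ω = j} := fun j => hα (measurableSet_singleton j)
    rcases eq_or_lt_of_le hx1 with h1 | h1
    · -- x = 1
      have hset : {ω | binDigit (α ω) x = 1} = Set.univ := by
        ext ω; simp [binDigit, h1]
      rw [hset, measure_univ, h1, ENNReal.ofReal_one]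
    · -- x < 1
      -- P(α = 0) = 0
      have hdisj : Pairwise (Function.onFun Disjoint fun j : ℕ => {ω | α ω = j}) := by
        intro i j hij
        exact Set.disjoint_left.2 fun ω h1 h2 => hij (h1.symm.trans h2)
      have hsum1 : ∑' j : ℕ, ℙ {ω | α ω = j} = 1 := by
        rw [← measure_iUnion hdisj hmeas]
        have : (⋃ j : ℕ, {ω | α ω = j}) = Set.univ := by
          ext ω; simp
        rw [this, measure_univ]
      have htail : ∑' j : ℕ, ℙ {ω | α ω = j + 1} = 1 := by
        have hg : ∀ j : ℕ, ℙ {ω | α ω = j + 1} = ENNReal.ofReal ((2:ℝ)⁻¹ ^ (j + 1)) :=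
          fun j => hgeom (j + 1) (Nat.le_add_left 1 j)
        simp only [hg]
        have key : ENNReal.ofReal (∑' j : ℕ, (2:ℝ)⁻¹ ^ (j + 1))
            = ∑' j : ℕ, ENNReal.ofReal ((2:ℝ)⁻¹ ^ (j + 1)) :=
          ENNReal.ofReal_tsum_of_nonneg (fun j => by positivity) geo_hasSum_one.summable
        rw [← key, geo_hasSum_one.tsum_eq, ENNReal.ofReal_one]
      have hα0 : ℙ {ω | α ω = 0} = 0 := by
        have hsplit := tsum_eq_zero_add' (f := fun j : ℕ => ℙ {ω | α ω = j}) ENNReal.summable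
        rw [hsum1, htail] at hsplit
        have : ℙ {ω | α ω = 0} + 1 = 0 + 1 := by rw [zero_add, ← hsplit]
        exact (ENNReal.add_left_inj (by simp)).1 this
      set A : ℕ → Set Ω := fun j =>
        if ((⌊x * 2 ^ j⌋ % 2 : ℤ) : ℝ) = 1 then {ω | α ω = j} else ∅ with hA
      have hAmeas : ∀ j, MeasurableSet (A j) := fun j => by
        rw [hA]; dsimp only; split
        · exact hmeas j
        · exact MeasurableSet.empty
      have hsub : ∀ j, A j ⊆ {ω | α ω = j} := fun j => by
        rw [hA]; dsimp only; split
        · exact subset_rfl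
        · exact Set.empty_subset _
      have hAdisj : Pairwise (Function.onFun Disjoint A) := fun i j hij =>
        Set.disjoint_left.2 fun ω hi hj => hij ((hsub i hi).symm.trans (hsub j hj))
      have hne1 : x ≠ 1 := ne_of_lt h1
      have hset : {ω | binDigit (α ω) x = 1} = ⋃ j, A j := by
        ext ω
        simp only [Set.mem_setOf_eq, Set.mem_iUnion, binDigit, if_neg hne1]
        constructor
        · intro h
          exact ⟨α ω, by rw [hA]; simp only [if_pos h]; exact Set.mem_setOf_eq ▸ rfl⟩
        · rintro ⟨j, hj⟩
          rw [hA] at hj; dsimp only at hj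
          split at hj
          · rename_i h
            rw [Set.mem_setOf_eq] at hj
            rw [hj]; exact h
          · exact absurd hj (Set.notMem_empty ω)
      rw [hset, measure_iUnion hAdisj hAmeas]
      have hval : ∀ j, ℙ (A j) = ENNReal.ofReal (((⌊x * 2 ^ j⌋ % 2 : ℤ) : ℝ) * 2⁻¹ ^ j) := by
        intro j
        rcases Nat.eq_zero_or_pos j with rfl | hj
        · have hfl : ⌊x * 2 ^ 0⌋ = 0 := by
            rw [pow_zero, mul_one]; exact Int.floor_eq_zero_iff.2 ⟨hx0, h1⟩
          have hb0 : ((⌊x * (2:ℝ) ^ 0⌋ % 2 : ℤ) : ℝ) = 0 := by rw [hfl]; norm_num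
          have hAe : A 0 = ∅ := by rw [hA]; dsimp only; rw [if_neg (by rw [hb0]; norm_num)]
          rw [hAe, hb0]; simp
        · rcases Int.emod_two_eq ⌊x * 2 ^ j⌋ with h | h
          · have hb0 : ((⌊x * 2 ^ j⌋ % 2 : ℤ) : ℝ) = 0 := by rw [h]; norm_num
            have hAe : A j = ∅ := by rw [hA]; dsimp only; rw [if_neg (by rw [hb0]; norm_num)]
            rw [hAe, hb0]; simp
          · have hb1 : ((⌊x * 2 ^ j⌋ % 2 : ℤ) : ℝ) = 1 := by rw [h]; norm_num
            have hAe : A j = {ω | α ω = j} := by rw [hA]; dsimp only; rw [if_pos hb1]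
            rw [hAe, hb1, one_mul, hgeom j hj]
      simp only [hval]
      have hbs := bin_hasSum x ⟨hx0, h1⟩
      have hnn : ∀ j : ℕ, (0:ℝ) ≤ ((⌊x * 2 ^ j⌋ % 2 : ℤ) : ℝ) * 2⁻¹ ^ j := by
        intro j
        rcases Int.emod_two_eq ⌊x * 2 ^ j⌋ with h | h <;> rw [h] <;> positivity
      have key : ENNReal.ofReal (∑' j : ℕ, ((⌊x * 2 ^ j⌋ % 2 : ℤ) : ℝ) * 2⁻¹ ^ j)
          = ∑' j : ℕ, ENNReal.ofReal (((⌊x * 2 ^ j⌋ % 2 : ℤ) : ℝ) * 2⁻¹ ^ j) :=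
        ENNReal.ofReal_tsum_of_nonneg hnn hbs.summable
      rw [← key, hbs.tsum_eq]
  · -- threshold part
    have hset : {ω | y > R ω} = R ⁻¹' Set.Iio y := rfl
    rw [hset, ← Measure.map_apply hR measurableSet_Iio, hRunif,
      Measure.smul_apply, Measure.restrict_apply measurableSet_Iio]
    have hint : Set.Iio y ∩ Set.Icc (-c) c = Set.Ico (-c) y := by
      ext t
      simp only [Set.mem_inter_iff, Set.mem_Iio, Set.mem_Icc, Set.mem_Ico]
      constructor
      · rintro ⟨h1, h2, h3⟩; exact ⟨h2, h1⟩
      · rintro ⟨h1, h2⟩; exact ⟨h2, h1, le_trans h2.le hy.2⟩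
    rw [hint, Real.volume_Ico, smul_eq_mul, hxdef,
      ENNReal.ofReal_div_of_pos h2c, ENNReal.div_eq_inv_mul]
    congr 2
    ring
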